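/- For every positive integer m, the sum over q from 1 to m-1 of C(m,q)·C(m-1,q+2)/C(2m,2q) (as rational numbers) equals (1/6)·m^2 - (13/6)·m - 3 + (5/2)·4^m·(m!)^2/(2m)!. -/

import Mathlib

open Finset

noncomputable def hh (m q : ℕ) : ℚ := (Nat.centralBinom q : ℚ) * (Nat.centralBinom (m - q) : ℚ)

lemma cb_succ_q (n : ℕ) :
    ((n : ℚ) + 1) * (Nat.centralBinom (n + 1) : ℚ) = 2 * (2 * n + 1) * (Nat.centralBinom n : ℚ) := by
  have := Nat.succ_mul_centralBinom_succ n
  have h : (((n + 1) * Nat.centralBinom (n + 1) : ℕ) : ℚ)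
      = ((2 * (2 * n + 1) * Nat.centralBinom n : ℕ) : ℚ) := by rw [this]
  push_cast at h
  linarith

lemma hhA1 (m q : ℕ) : ((q : ℚ) + 1) * hh (m + 1) (q + 1) = 2 * (2 * q + 1) * hh m q := by
  unfold hh
  rw [Nat.succ_sub_succ]
  have h := cb_succ_q q
  nlinarith [h]

lemma hhA2 (m q : ℕ) (h : q ≤ m) :
    (((m - q : ℕ) : ℚ) + 1) * hh (m + 1) q = 2 * (2 * ((m - q : ℕ) : ℚ) + 1) * hh m q := by
  unfold hh
  have e : m + 1 - q = (m - q) + 1 := by omega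
  rw [e]
  have h2 := cb_succ_q (m - q)
  nlinarith [h2]

lemma hh_pos (m q : ℕ) : 0 < hh m q := by
  unfold hh
  have := Nat.centralBinom_pos q
  have := Nat.centralBinom_pos (m - q)
  positivity

lemma hh_ne (m q : ℕ) : hh m q ≠ 0 := ne_of_gt (hh_pos m q)

/-- The common certificate difference. -/
noncomputable def GG (m q : ℕ) : ℚ := (q : ℚ) * hh (m + 1) q / ((m : ℚ) + 1)

lemma cast_mu (m q : ℕ) (h : q ≤ m) : ((m - q : ℕ) : ℚ) = (m : ℚ) - q := by
  push_cast [Nat.cast_sub h]; ring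

lemma hh_succ_expr (m q : ℕ) (h : q ≤ m) :
    hh (m + 1) q = 2 * (2 * ((m : ℚ) - q) + 1) * hh m q / ((m : ℚ) - q + 1) := by
  have h2 := hhA2 m q h
  rw [cast_mu m q h] at h2
  have hne : (m : ℚ) - q + 1 ≠ 0 := by
    have : (q : ℚ) ≤ m := by exact_mod_cast h
    intro hc; nlinarith
  field_simp
  linarith [h2]

lemma hh_succ_succ_expr (m q : ℕ) :
    hh (m + 1) (q + 1) = 2 * (2 * (q : ℚ) + 1) * hh m q / ((q : ℚ) + 1) := by
  have h1 := hhA1 m q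
  have hne : (q : ℚ) + 1 ≠ 0 := by positivity
  field_simp
  linarith [h1]

lemma certD0 (m q : ℕ) (h : q ≤ m) :
    hh (m + 1) q = 4 * hh m q + (GG m q - GG m (q + 1)) := by
  unfold GG
  rw [hh_succ_expr m q h, hh_succ_succ_expr m q]
  have hq : (0:ℚ) < (q : ℚ) + 1 := by positivity
  have hmu : (0:ℚ) < (m : ℚ) - q + 1 := by
    have : (q : ℚ) ≤ m := by exact_mod_cast h
    linarith
  have hm1 : (0:ℚ) < (m : ℚ) + 1 := by positivity
  field_simp
  push_cast
  ring

lemma certD2 (m q : ℕ) (h : q ≤ m) :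
    ((m : ℚ) + 2) * hh (m + 1) q / ((q : ℚ) + 1)
      = 2 * (2 * (m : ℚ) + 3) * hh m q / ((q : ℚ) + 1) + (GG m q - GG m (q + 1)) := by
  unfold GG
  rw [hh_succ_expr m q h, hh_succ_succ_expr m q]
  have hq : (0:ℚ) < (q : ℚ) + 1 := by positivity
  have hmu : (0:ℚ) < (m : ℚ) - q + 1 := by
    have : (q : ℚ) ≤ m := by exact_mod_cast h
    linarith
  have hm1 : (0:ℚ) < (m : ℚ) + 1 := by positivity
  field_simp
  push_cast
  ring

lemma certD3 (m q : ℕ) (h : q ≤ m) :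
    ((m : ℚ) + 3) * hh (m + 1) q / ((q : ℚ) + 2)
      = 2 * (2 * (m : ℚ) + 5) * hh m q / ((q : ℚ) + 2) + (GG m q - GG m (q + 1)) := by
  unfold GG
  rw [hh_succ_expr m q h, hh_succ_succ_expr m q]
  have hq : (0:ℚ) < (q : ℚ) + 1 := by positivity
  have hq2 : (0:ℚ) < (q : ℚ) + 2 := by positivity
  have hmu : (0:ℚ) < (m : ℚ) - q + 1 := by
    have : (q : ℚ) ≤ m := by exact_mod_cast h
    linarith
  have hm1 : (0:ℚ) < (m : ℚ) + 1 := by positivity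
  field_simp
  push_cast
  ring

lemma GG_telescope (m : ℕ) :
    ∑ q ∈ Finset.range (m + 1), (GG m q - GG m (q + 1))
      = -(Nat.centralBinom (m + 1) : ℚ) := by
  rw [Finset.sum_range_sub' (GG m) (m + 1)]
  unfold GG hh
  simp [Nat.sub_self, Nat.centralBinom_zero]
  rw [div_eq_iff (by positivity : ((m:ℚ)+1) ≠ 0)]
  ring

lemma L0 (m : ℕ) : ∑ q ∈ Finset.range (m + 1), hh m q = 4 ^ m := by
  induction m with
  | zero => simp [hh, Nat.centralBinom_zero]
  | succ m ih =>
    rw [Finset.sum_range_succ]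
    have hlast : hh (m + 1) (m + 1) = (Nat.centralBinom (m + 1) : ℚ) := by
      unfold hh; simp [Nat.sub_self, Nat.centralBinom_zero]
    have hstep : ∑ q ∈ Finset.range (m + 1), hh (m + 1) q
        = ∑ q ∈ Finset.range (m + 1), (4 * hh m q + (GG m q - GG m (q + 1))) := by
      refine Finset.sum_congr rfl fun q hq => ?_
      exact certD0 m q (Nat.lt_succ_iff.mp (Finset.mem_range.mp hq))
    rw [hstep, Finset.sum_add_distrib, ← Finset.mul_sum, ih, GG_telescope, hlast]
    ring

lemma L1 (m : ℕ) :
    ∑ q ∈ Finset.range (m + 1), (q : ℚ) * hh m q = (m : ℚ) * 4 ^ m / 2 := by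
  have hrefl := Finset.sum_range_reflect (fun j => (j : ℚ) * hh m j) (m + 1)
  have hsymm : ∀ q ∈ Finset.range (m + 1),
      ((m + 1 - 1 - q : ℕ) : ℚ) * hh m (m + 1 - 1 - q) = ((m : ℚ) - q) * hh m q := by
    intro q hq
    have hqm : q ≤ m := Nat.lt_succ_iff.mp (Finset.mem_range.mp hq)
    have e1 : m + 1 - 1 - q = m - q := by omega
    rw [e1, cast_mu m q hqm]
    congr 1
    unfold hh
    rw [Nat.sub_sub_self hqm, mul_comm]
  rw [Finset.sum_congr rfl hsymm] at hrefl
  have expand : ∑ q ∈ Finset.range (m + 1), ((m : ℚ) - q) * hh m q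
      = (m : ℚ) * ∑ q ∈ Finset.range (m + 1), hh m q
        - ∑ q ∈ Finset.range (m + 1), (q : ℚ) * hh m q := by
    rw [Finset.mul_sum, ← Finset.sum_sub_distrib]
    exact Finset.sum_congr rfl fun q _ => by ring
  have h0 := L0 m
  rw [expand, h0] at hrefl
  linarith

lemma L23 (m : ℕ) :
    (∑ q ∈ Finset.range (m + 1), hh m q / ((q : ℚ) + 1)
        = (Nat.centralBinom (m + 1) : ℚ) / 2)
    ∧ (∑ q ∈ Finset.range (m + 1), hh m q / ((q : ℚ) + 2)
        = (Nat.centralBinom (m + 2) : ℚ) / 12) := by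
  induction m with
  | zero =>
    constructor
    · simp [hh, Nat.centralBinom_zero]
      norm_num [Nat.centralBinom]
    · simp [hh, Nat.centralBinom_zero]
      rw [show Nat.centralBinom 2 = 6 from by decide]
      norm_num
  | succ m ih =>
    obtain ⟨ihA, ihB⟩ := ih
    have hlast : hh (m + 1) (m + 1) = (Nat.centralBinom (m + 1) : ℚ) := by
      unfold hh; simp [Nat.sub_self, Nat.centralBinom_zero]
    have hm2 : ((m : ℚ) + 2) ≠ 0 := by positivity
    have hm3 : ((m : ℚ) + 3) ≠ 0 := by positivity
    have cb1 : ((m : ℚ) + 2) * (Nat.centralBinom (m + 2) : ℚ)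
        = 2 * (2 * (m : ℚ) + 3) * (Nat.centralBinom (m + 1) : ℚ) := by
      have := cb_succ_q (m + 1)
      push_cast at this ⊢
      linarith
    have cb2 : ((m : ℚ) + 3) * (Nat.centralBinom (m + 3) : ℚ)
        = 2 * (2 * (m : ℚ) + 5) * (Nat.centralBinom (m + 2) : ℚ) := by
      have := cb_succ_q (m + 2)
      push_cast at this ⊢
      linarith
    constructor
    · -- weight 1/(q+1)
      have hstep : ∑ q ∈ Finset.range (m + 1), ((m : ℚ) + 2) * hh (m + 1) q / ((q : ℚ) + 1)
          = ∑ q ∈ Finset.range (m + 1),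
              (2 * (2 * (m : ℚ) + 3) * hh m q / ((q : ℚ) + 1) + (GG m q - GG m (q + 1))) := by
        refine Finset.sum_congr rfl fun q hq => ?_
        exact certD2 m q (Nat.lt_succ_iff.mp (Finset.mem_range.mp hq))
      have key : ((m : ℚ) + 2) * ∑ q ∈ Finset.range (m + 2), hh (m + 1) q / ((q : ℚ) + 1)
          = ((m : ℚ) + 2) * ((Nat.centralBinom (m + 2) : ℚ) / 2) := by
        rw [Finset.sum_range_succ, mul_add, Finset.mul_sum]
        have e1 : ∀ q ∈ Finset.range (m+1),
            ((m : ℚ) + 2) * (hh (m+1) q / ((q : ℚ) + 1))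
            = ((m : ℚ) + 2) * hh (m + 1) q / ((q : ℚ) + 1) := fun q _ => by ring
        rw [Finset.sum_congr rfl e1, hstep, Finset.sum_add_distrib, GG_telescope]
        have e2 : ∑ q ∈ Finset.range (m+1), 2 * (2 * (m : ℚ) + 3) * hh m q / ((q : ℚ) + 1)
            = 2 * (2 * (m : ℚ) + 3) * ∑ q ∈ Finset.range (m+1), hh m q / ((q : ℚ) + 1) := by
          rw [Finset.mul_sum]
          exact Finset.sum_congr rfl fun q _ => by ring
        rw [e2, ihA, hlast]
        push_cast
        field_simp
        linear_combination (-((m:ℚ)+2)) * cb1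
      exact mul_left_cancel₀ hm2 key
    · -- weight 1/(q+2)
      have hstep : ∑ q ∈ Finset.range (m + 1), ((m : ℚ) + 3) * hh (m + 1) q / ((q : ℚ) + 2)
          = ∑ q ∈ Finset.range (m + 1),
              (2 * (2 * (m : ℚ) + 5) * hh m q / ((q : ℚ) + 2) + (GG m q - GG m (q + 1))) := by
        refine Finset.sum_congr rfl fun q hq => ?_
        exact certD3 m q (Nat.lt_succ_iff.mp (Finset.mem_range.mp hq))
      have key : ((m : ℚ) + 3) * ∑ q ∈ Finset.range (m + 2), hh (m + 1) q / ((q : ℚ) + 2)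
          = ((m : ℚ) + 3) * ((Nat.centralBinom (m + 3) : ℚ) / 12) := by
        rw [Finset.sum_range_succ, mul_add, Finset.mul_sum]
        have e1 : ∀ q ∈ Finset.range (m+1),
            ((m : ℚ) + 3) * (hh (m+1) q / ((q : ℚ) + 2))
            = ((m : ℚ) + 3) * hh (m + 1) q / ((q : ℚ) + 2) := fun q _ => by ring
        rw [Finset.sum_congr rfl e1, hstep, Finset.sum_add_distrib, GG_telescope]
        have e2 : ∑ q ∈ Finset.range (m+1), 2 * (2 * (m : ℚ) + 5) * hh m q / ((q : ℚ) + 2)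
            = 2 * (2 * (m : ℚ) + 5) * ∑ q ∈ Finset.range (m+1), hh m q / ((q : ℚ) + 2) := by
          rw [Finset.mul_sum]
          exact Finset.sum_congr rfl fun q _ => by ring
        rw [e2, ihB, hlast]
        push_cast
        field_simp
        linear_combination (-((m:ℚ)+3)) * cb2
      have goal2 : (Nat.centralBinom (m + 1 + 2) : ℚ) / 12
          = (Nat.centralBinom (m + 3) : ℚ) / 12 := by norm_num
      rw [show m + 1 + 1 = m + 2 from rfl]
      rw [goal2]  -- may need adjusting
      exact mul_left_cancel₀ hm3 key

lemma factorial_ne (n : ℕ) : ((n.factorial : ℚ)) ≠ 0 := by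
  exact_mod_cast Nat.factorial_ne_zero n

lemma PW (m q : ℕ) (hm : 1 ≤ m) (hq : q ≤ m) :
    ((m.choose q : ℚ) * ((m - 1).choose (q + 2) : ℚ)) / ((2 * m).choose (2 * q) : ℚ)
      = hh m q * (((m : ℚ) - q) * ((m : ℚ) - q - 1) * ((m : ℚ) - q - 2))
        / (((q : ℚ) + 1) * ((q : ℚ) + 2) * (m : ℚ) * (Nat.centralBinom m : ℚ)) := by
  rcases le_or_gt (q + 3) m with hcase | hcase
  · -- main case : q + 3 ≤ m
    obtain ⟨b, rfl⟩ : ∃ b, m = q + b + 3 := ⟨m - q - 3, by omega⟩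
    unfold hh
    unfold Nat.centralBinom
    rw [show q + b + 3 - q = b + 3 by omega, show q + b + 3 - 1 = q + b + 2 by omega]
    rw [Nat.cast_choose ℚ (show q ≤ q + b + 3 by omega)]
    rw [Nat.cast_choose ℚ (show q + 2 ≤ q + b + 2 by omega)]
    rw [Nat.cast_choose ℚ (show 2 * q ≤ 2 * (q + b + 3) by omega)]
    rw [Nat.cast_choose ℚ (show q ≤ 2 * q by omega)]
    rw [Nat.cast_choose ℚ (show b + 3 ≤ 2 * (b + 3) by omega)]
    rw [Nat.cast_choose ℚ (show q + b + 3 ≤ 2 * (q + b + 3) by omega)]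
    rw [show q + b + 3 - q = b + 3 by omega, show q + b + 2 - (q + 2) = b by omega,
      show 2 * (q + b + 3) - 2 * q = 2 * (b + 3) by omega,
      show 2 * q - q = q by omega, show 2 * (b + 3) - (b + 3) = b + 3 by omega,
      show 2 * (q + b + 3) - (q + b + 3) = q + b + 3 by omega]
    rw [show (q + b + 3).factorial = (q + b + 3) * (q + b + 2).factorial from rfl]
    rw [show (b + 3).factorial = (b + 3) * ((b + 2) * ((b + 1) * b.factorial)) from rfl]
    rw [show (q + 2).factorial = (q + 2) * ((q + 1) * q.factorial) from rfl]
    have nA := factorial_ne q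
    have nB := factorial_ne b
    have nC := factorial_ne (q + b + 2)
    have nD := factorial_ne (2 * q)
    have nE := factorial_ne (2 * (b + 3))
    have nF := factorial_ne (2 * (q + b + 3))
    push_cast
    field_simp
    ring
  · -- degenerate case : m ≤ q + 2
    have hz : ((m - 1).choose (q + 2) : ℚ) = 0 := by
      rw [Nat.choose_eq_zero_of_lt (by omega)]
      norm_num
    rw [hz]
    have hprod : ((m : ℚ) - q) * ((m : ℚ) - q - 1) * ((m : ℚ) - q - 2) = 0 := by
      have hc : (m : ℚ) - q = ((m - q : ℕ) : ℚ) := (cast_mu m q hq).symm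
      have hk : m - q = 0 ∨ m - q = 1 ∨ m - q = 2 := by omega
      rcases hk with h | h | h <;> rw [hc, h] <;> norm_num
    rw [hprod]
    simp

theorem sum_q_add_two_identity (m : ℕ) (hm : 1 ≤ m) :
    ∑ q ∈ Finset.Icc 1 (m - 1),
      ((m.choose q : ℚ) * ((m - 1).choose (q + 2) : ℚ)) / ((2 * m).choose (2 * q) : ℚ)
    = (1 / 6) * (m : ℚ) ^ 2 - (13 / 6) * (m : ℚ) - 3
      + (5 / 2) * 4 ^ m * (m.factorial : ℚ) ^ 2 / ((2 * m).factorial : ℚ) := by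
  set X : ℚ := (Nat.centralBinom m : ℚ) with hX
  have hXpos : (0:ℚ) < X := by rw [hX]; exact_mod_cast Nat.centralBinom_pos m
  have hXne : X ≠ 0 := ne_of_gt hXpos
  have hmQ : (0:ℚ) < (m:ℚ) := by exact_mod_cast hm
  have hmne : (m:ℚ) ≠ 0 := ne_of_gt hmQ
  set F : ℕ → ℚ := fun q => hh m q * (((m : ℚ) - q) * ((m : ℚ) - q - 1) * ((m : ℚ) - q - 2))
        / (((q : ℚ) + 1) * ((q : ℚ) + 2) * (m : ℚ) * X) with hF
  have h1 : ∑ q ∈ Finset.Icc 1 (m - 1),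
      ((m.choose q : ℚ) * ((m - 1).choose (q + 2) : ℚ)) / ((2 * m).choose (2 * q) : ℚ)
      = ∑ q ∈ Finset.Icc 1 (m - 1), F q := by
    refine Finset.sum_congr rfl fun q hq => ?_
    have hq' : q ≤ m := by
      have := (Finset.mem_Icc.mp hq).2; omega
    exact PW m q hm hq'
  rw [h1]
  have hIcc : Finset.Icc 1 (m - 1) = Finset.Ico 1 m := by
    rw [← Finset.Ico_add_one_right_eq_Icc]
    congr 1
    omega
  have h2 : ∑ q ∈ Finset.Icc 1 (m - 1), F q = ∑ i ∈ Finset.range (m - 1), F (1 + i) := by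
    rw [hIcc, Finset.sum_Ico_eq_sum_range]
  have hFm : F m = 0 := by
    simp only [hF, sub_self, zero_mul, mul_zero, zero_div]
  have em : m = m - 1 + 1 := by omega
  have h3 : ∑ q ∈ Finset.range (m + 1), F q
      = F 0 + ∑ i ∈ Finset.range (m - 1), F (1 + i) + F m := by
    calc ∑ q ∈ Finset.range (m + 1), F q
        = ∑ i ∈ Finset.range m, F (i + 1) + F 0 := Finset.sum_range_succ' F m
      _ = ∑ i ∈ Finset.range (m - 1 + 1), F (i + 1) + F 0 := by rw [← em]
      _ = (∑ i ∈ Finset.range (m - 1), F (i + 1) + F (m - 1 + 1)) + F 0 := by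
          rw [Finset.sum_range_succ]
      _ = F 0 + ∑ i ∈ Finset.range (m - 1), F (1 + i) + F m := by
          rw [← em]
          have e : ∑ i ∈ Finset.range (m - 1), F (i + 1)
              = ∑ i ∈ Finset.range (m - 1), F (1 + i) :=
            Finset.sum_congr rfl fun i _ => by rw [Nat.add_comm]
          rw [e]; ring
  have hdecomp : ∀ q : ℕ, F q
      = (3 * (m:ℚ) * hh m q - (q:ℚ) * hh m q
          + ((m:ℚ) * ((m:ℚ) + 1) * ((m:ℚ) - 1)) * (hh m q / ((q:ℚ) + 1))
          - ((m:ℚ) * ((m:ℚ) + 1) * ((m:ℚ) + 2)) * (hh m q / ((q:ℚ) + 2))) / ((m:ℚ) * X) := by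
    intro q
    simp only [hF]
    have hq1 : ((q:ℚ) + 1) ≠ 0 := by positivity
    have hq2 : ((q:ℚ) + 2) ≠ 0 := by positivity
    field_simp
    ring
  have hsum : ∑ q ∈ Finset.range (m + 1), F q
      = (3 * (m:ℚ) * 4 ^ m - (m:ℚ) * 4 ^ m / 2
          + ((m:ℚ) * ((m:ℚ) + 1) * ((m:ℚ) - 1)) * ((Nat.centralBinom (m+1) : ℚ) / 2)
          - ((m:ℚ) * ((m:ℚ) + 1) * ((m:ℚ) + 2)) * ((Nat.centralBinom (m+2) : ℚ) / 12)) / ((m:ℚ) * X) := by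
    rw [Finset.sum_congr rfl fun q _ => hdecomp q]
    rw [← Finset.sum_div]
    congr 1
    simp only [Finset.sum_sub_distrib, Finset.sum_add_distrib, ← Finset.mul_sum]
    rw [L0 m, L1 m, (L23 m).1, (L23 m).2]
  have hF0 : F 0 = ((m:ℚ) - 1) * ((m:ℚ) - 2) / 2 := by
    have hh0 : hh m 0 = X := by
      unfold hh
      simp [Nat.centralBinom_zero, hX]
    simp only [hF, hh0, Nat.cast_zero]
    field_simp
    ring
  have key : ∑ i ∈ Finset.range (m - 1), F (1 + i)
      = ∑ q ∈ Finset.range (m + 1), F q - F 0 - F m := by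
    rw [h3]; ring
  rw [h2, key, hsum, hF0, hFm]
  have eC1 : (Nat.centralBinom (m+1) : ℚ) = 2 * (2*(m:ℚ) + 1) * X / ((m:ℚ) + 1) := by
    have h := cb_succ_q m
    rw [← hX] at h
    have hne : ((m:ℚ) + 1) ≠ 0 := by positivity
    field_simp
    linarith
  have eC2 : (Nat.centralBinom (m+2) : ℚ)
      = 2 * (2*(m:ℚ) + 3) * (Nat.centralBinom (m+1) : ℚ) / ((m:ℚ) + 2) := by
    have h := cb_succ_q (m + 1)
    push_cast at h
    have hne : ((m:ℚ) + 2) ≠ 0 := by positivity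
    field_simp
    linarith
  have eX : ((2 * m).factorial : ℚ) = X * (m.factorial : ℚ) ^ 2 := by
    have hnat := Nat.choose_mul_factorial_mul_factorial (show m ≤ 2*m by omega)
    rw [show 2*m - m = m by omega] at hnat
    have h2 : (((2*m).choose m : ℚ)) * (m.factorial : ℚ) * (m.factorial : ℚ)
        = ((2*m).factorial : ℚ) := by exact_mod_cast congrArg (Nat.cast : ℕ → ℚ) hnat
    rw [hX, Nat.centralBinom, ← h2]
    ring
  rw [eC2, eC1, eX]
  have hne1 : ((m:ℚ) + 1) ≠ 0 := by positivity
  have hne2 : ((m:ℚ) + 2) ≠ 0 := by positivity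
  have hfne := factorial_ne m
  field_simp
  ring
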